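/- arXiv:2505.18023 — 3 statements merged into one kernel-verified Lean document; each statement's English description precedes it below -/
import Mathlib

section
/- An arrangement of n families of at most k parallel hyperplanes each in ℝ^d partitions ℝ^d into at most ∑_{i=0}^{d} k^i · C(n,i) connected regions (equal to (k+1)^n when n ≤ d). -/
open Finset

namespace Stmt2Aux

noncomputable section
open Classical

/-- The linear functional `x ↦ ∑ j, a j * x j`. -/
def ell {d : ℕ} (a : Fin d → ℝ) (x : Fin d → ℝ) : ℝ := ∑ j, a j * x j

/-- Number of elements of `B` strictly below `t`. -/
def cnt (B : Finset ℝ) (t : ℝ) : ℕ := (B.filter (fun b => b < t)).card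

def good {d n : ℕ} (a : Fin n → Fin d → ℝ) (B : Fin n → Finset ℝ) (x : Fin d → ℝ) : Prop :=
  ∀ i, ell (a i) x ∉ B i

def pv {d n : ℕ} (a : Fin n → Fin d → ℝ) (B : Fin n → Finset ℝ) (x : Fin d → ℝ) :
    Fin n → ℕ := fun i => cnt (B i) (ell (a i) x)

def Sig {d n : ℕ} (a : Fin n → Fin d → ℝ) (B : Fin n → Finset ℝ) : Set (Fin n → ℕ) :=
  {σ | ∃ x, good a B x ∧ pv a B x = σ}

lemma cnt_mono {B : Finset ℝ} {t s : ℝ} (h : t ≤ s) : cnt B t ≤ cnt B s := by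
  apply Finset.card_le_card
  intro b hb
  rw [Finset.mem_filter] at *
  exact ⟨hb.1, hb.2.trans_le h⟩

lemma cnt_lt {B : Finset ℝ} {t s b : ℝ} (hb : b ∈ B) (h1 : t ≤ b) (h2 : b < s) :
    cnt B t < cnt B s := by
  apply Finset.card_lt_card
  have hsub : B.filter (fun c => c < t) ⊆ B.filter (fun c => c < s) := by
    intro c hc
    rw [Finset.mem_filter] at *
    exact ⟨hc.1, hc.2.trans_le (h1.trans h2.le)⟩
  rw [Finset.ssubset_iff_of_subset hsub]
  exact ⟨b, Finset.mem_filter.2 ⟨hb, h2⟩, fun hc => absurd (Finset.mem_filter.1 hc).2 (not_lt.2 h1)⟩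

lemma cnt_le_of_no_between {B : Finset ℝ} {t s : ℝ}
    (hc : ∀ b ∈ B, t ≤ b → ¬ b < s) : cnt B s ≤ cnt B t := by
  apply Finset.card_le_card
  intro b hb
  rw [Finset.mem_filter] at *
  refine ⟨hb.1, ?_⟩
  by_contra h
  exact hc b hb.1 (not_lt.1 h) hb.2

lemma cnt_between {B : Finset ℝ} {t s : ℝ} (h : cnt B t < cnt B s) :
    ∃ b ∈ B, t ≤ b ∧ b < s := by
  by_contra hc
  push_neg at hc
  exact absurd (cnt_le_of_no_between (fun b hb htb hbs => absurd hbs (not_lt.2 (hc b hb htb)))) (by omega)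

lemma mem_gap {B : Finset ℝ} {u1 u2 u : ℝ} (h1 : u1 ∉ B) (h2 : u2 ∉ B)
    (hc : cnt B u1 = cnt B u2) (hl : u1 ≤ u) (hr : u ≤ u2) :
    u ∉ B ∧ cnt B u = cnt B u1 := by
  have m1 : cnt B u1 ≤ cnt B u := cnt_mono hl
  have m2 : cnt B u ≤ cnt B u2 := cnt_mono hr
  have heq : cnt B u = cnt B u1 := by omega
  refine ⟨?_, heq⟩
  intro hu
  have hne : u ≠ u2 := fun e => h2 (e ▸ hu)
  have : cnt B u < cnt B u2 := cnt_lt hu le_rfl (hr.lt_of_ne hne)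
  omega

lemma mem_gap' {B : Finset ℝ} {u1 u2 u : ℝ} {s : ℕ} (h1 : u1 ∉ B) (h2 : u2 ∉ B)
    (hc1 : cnt B u1 = s) (hc2 : cnt B u2 = s)
    (hl : min u1 u2 ≤ u) (hr : u ≤ max u1 u2) : u ∉ B ∧ cnt B u = s := by
  rcases le_total u1 u2 with h | h
  · rw [min_eq_left h] at hl; rw [max_eq_right h] at hr
    have := mem_gap h1 h2 (hc1.trans hc2.symm) hl hr
    exact ⟨this.1, this.2.trans hc1⟩
  · rw [min_eq_right h] at hl; rw [max_eq_left h] at hr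
    have := mem_gap h2 h1 (hc2.trans hc1.symm) hl hr
    exact ⟨this.1, this.2.trans hc2⟩

lemma sig_finite {d n : ℕ} (a : Fin n → Fin d → ℝ) (B : Fin n → Finset ℝ) :
    (Sig a B).Finite := by
  apply Set.Finite.subset (Set.Finite.pi (t := fun i : Fin n => Set.Iic ((B i).card))
    (fun i => Set.finite_Iic _))
  rintro σ ⟨x, _, rfl⟩
  intro i _
  exact Finset.card_filter_le _ _

lemma ell_lerp {d : ℕ} (β : Fin d → ℝ) (x y : Fin d → ℝ) (θ : ℝ) :
    ell β (fun j => x j + θ * (y j - x j)) = ell β x + θ * (ell β y - ell β x) := by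
  have h : ∀ j, β j * (x j + θ * (y j - x j))
      = β j * x j + θ * (β j * y j) - θ * (β j * x j) := fun j => by ring
  simp only [ell]
  simp_rw [h, Finset.sum_sub_distrib, Finset.sum_add_distrib, ← Finset.mul_sum]
  ring

lemma ell_comb {d : ℕ} (c : Fin d → ℝ) (x y : Fin d → ℝ) (α β : ℝ) :
    ell c (α • x + β • y) = α * ell c x + β * ell c y := by
  simp only [ell, Finset.mul_sum, ← Finset.sum_add_distrib]
  refine Finset.sum_congr rfl fun j _ => ?_
  simp [Pi.add_apply, Pi.smul_apply, smul_eq_mul]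
  ring

lemma lerp_between {ux uy θ : ℝ} (h0 : 0 ≤ θ) (h1 : θ ≤ 1) :
    min ux uy ≤ ux + θ * (uy - ux) ∧ ux + θ * (uy - ux) ≤ max ux uy := by
  rcases le_total ux uy with h | h
  · rw [min_eq_left h, max_eq_right h]
    constructor <;> nlinarith
  · rw [min_eq_right h, max_eq_left h]
    constructor <;> nlinarith

lemma comb_between {u1 u2 α β : ℝ} (hα : 0 ≤ α) (hβ : 0 ≤ β) (hs : α + β = 1) :
    min u1 u2 ≤ α * u1 + β * u2 ∧ α * u1 + β * u2 ≤ max u1 u2 := by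
  have hα1 : α = 1 - β := by linarith
  have hβ1 : β ≤ 1 := by linarith
  subst hα1
  have e : (1 - β) * u1 + β * u2 = u1 + β * (u2 - u1) := by ring
  rw [e]
  exact lerp_between hβ hβ1

lemma cnt_shift (B : Finset ℝ) (c t : ℝ) :
    cnt (B.image (fun s => s - c)) (t - c) = cnt B t := by
  unfold cnt
  rw [Finset.filter_image, Finset.card_image_of_injective _ sub_left_injective]
  congr 1
  ext b
  simp [sub_lt_sub_iff_right]

lemma mem_shift {B : Finset ℝ} {c t : ℝ} :
    t - c ∈ B.image (fun s => s - c) ↔ t ∈ B := by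
  constructor
  · rintro h
    obtain ⟨s, hs, he⟩ := Finset.mem_image.1 h
    have : s = t := by linarith [sub_left_injective he]
    exact this ▸ hs
  · intro h
    exact Finset.mem_image.2 ⟨t, h, rfl⟩


def Cross {d n : ℕ} (a : Fin (n+1) → Fin d → ℝ) (B : Fin (n+1) → Finset ℝ)
    (τ : Fin n → ℕ) (b : ℝ) : Prop :=
  ∃ x, (∀ i : Fin n, ell (a i.castSucc) x ∉ B i.castSucc
          ∧ cnt (B i.castSucc) (ell (a i.castSucc) x) = τ i)
    ∧ ∃ y, (∀ i : Fin n, ell (a i.castSucc) y ∉ B i.castSucc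
          ∧ cnt (B i.castSucc) (ell (a i.castSucc) y) = τ i)
    ∧ ell (a (Fin.last n)) x < b ∧ b < ell (a (Fin.last n)) y

lemma sig_bound (k : ℕ) :
    ∀ (n : ℕ) (d : ℕ) (a : Fin n → Fin d → ℝ) (B : Fin n → Finset ℝ),
      (∀ i, (B i).card ≤ k) →
      (Sig a B).ncard ≤ ∑ i ∈ Finset.range (d + 1), k ^ i * n.choose i := by
  intro n
  induction n with
  | zero =>
    intro d a B _
    have h1 : Sig a B ⊆ {fun i => i.elim0} := by
      rintro σ ⟨x, _, rfl⟩
      exact Set.mem_singleton_iff.2 (funext fun i => i.elim0)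
    calc (Sig a B).ncard ≤ ({fun i => i.elim0} : Set (Fin 0 → ℕ)).ncard :=
          Set.ncard_le_ncard h1 (Set.finite_singleton _)
      _ = 1 := Set.ncard_singleton _
      _ ≤ _ := by
          calc 1 = k ^ 0 * Nat.choose 0 0 := by simp
            _ ≤ _ := Finset.single_le_sum (f := fun i => k ^ i * Nat.choose 0 i)
                (fun i _ => Nat.zero_le _) (Finset.mem_range.2 (by omega))
  | succ n IH =>
    intro d a B hB
    classical
    have hfin := sig_finite a B
    -- abbreviations (written out inline below):
    -- TF = hfin.toFinset, π σ = σ ∘ Fin.castSucc, I = TF.image π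
    have fiber_bound : ∀ τ ∈ hfin.toFinset.image (fun σ => σ ∘ Fin.castSucc),
        (hfin.toFinset.filter (fun σ => σ ∘ Fin.castSucc = τ)).card
          ≤ 1 + ((B (Fin.last n)).filter (fun b => Cross a B τ b)).card := by
      intro τ hτ
      have hinj : Set.InjOn (fun σ : Fin (n+1) → ℕ => σ (Fin.last n))
          ↑(hfin.toFinset.filter (fun σ => σ ∘ Fin.castSucc = τ)) := by
        intro σ1 h1 σ2 h2 he
        have h1' := (Finset.mem_filter.1 h1).2
        have h2' := (Finset.mem_filter.1 h2).2
        funext j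
        refine Fin.lastCases ?_ (fun i => ?_) j
        · exact he
        · exact congrFun (h1'.trans h2'.symm) i
      have hcard : (hfin.toFinset.filter (fun σ => σ ∘ Fin.castSucc = τ)).card
          = ((hfin.toFinset.filter (fun σ => σ ∘ Fin.castSucc = τ)).image
              (fun σ => σ (Fin.last n))).card :=
        (Finset.card_image_of_injOn hinj).symm
      have hSne : ((hfin.toFinset.filter (fun σ => σ ∘ Fin.castSucc = τ)).image
          (fun σ => σ (Fin.last n))).Nonempty := by
        obtain ⟨σ, hσ, hσe⟩ := Finset.mem_image.1 hτ
        exact ⟨σ (Fin.last n), Finset.mem_image.2 ⟨σ, Finset.mem_filter.2 ⟨hσ, hσe⟩, rfl⟩⟩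
      set S := (hfin.toFinset.filter (fun σ => σ ∘ Fin.castSucc = τ)).image
          (fun σ => σ (Fin.last n)) with hS
      have hget : ∀ s ∈ S, ∃ x, good a B x
          ∧ (∀ i : Fin n, ell (a i.castSucc) x ∉ B i.castSucc
              ∧ cnt (B i.castSucc) (ell (a i.castSucc) x) = τ i)
          ∧ ell (a (Fin.last n)) x ∉ B (Fin.last n)
          ∧ cnt (B (Fin.last n)) (ell (a (Fin.last n)) x) = s := by
        intro s hs
        obtain ⟨σ, hσf, hσe⟩ := Finset.mem_image.1 hs
        have hσTF := (Finset.mem_filter.1 hσf).1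
        have hστ := (Finset.mem_filter.1 hσf).2
        obtain ⟨x, hgx, hpx⟩ := hfin.mem_toFinset.1 hσTF
        refine ⟨x, hgx, fun i => ⟨hgx i.castSucc, ?_⟩, hgx (Fin.last n), ?_⟩
        · exact (congrFun hpx i.castSucc).trans (congrFun hστ i)
        · exact (congrFun hpx (Fin.last n)).trans hσe
      obtain ⟨x1, hg1, hc1, hnb1, hcnt1⟩ := hget (S.min' hSne) (S.min'_mem hSne)
      obtain ⟨x2, hg2, hc2, hnb2, hcnt2⟩ := hget (S.max' hSne) (S.max'_mem hSne)
      have hkey : cnt (B (Fin.last n)) (ell (a (Fin.last n)) x2)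
          ≤ cnt (B (Fin.last n)) (ell (a (Fin.last n)) x1)
            + ((B (Fin.last n)).filter (fun b =>
                ell (a (Fin.last n)) x1 < b ∧ b < ell (a (Fin.last n)) x2)).card := by
        have hsub : (B (Fin.last n)).filter (fun b => b < ell (a (Fin.last n)) x2)
            ⊆ (B (Fin.last n)).filter (fun b => b < ell (a (Fin.last n)) x1)
              ∪ (B (Fin.last n)).filter (fun b =>
                  ell (a (Fin.last n)) x1 < b ∧ b < ell (a (Fin.last n)) x2) := by
          intro b hb
          rw [Finset.mem_filter] at hb
          rcases lt_or_ge b (ell (a (Fin.last n)) x1) with h | h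
          · exact Finset.mem_union_left _ (Finset.mem_filter.2 ⟨hb.1, h⟩)
          · have hlt : ell (a (Fin.last n)) x1 < b := h.lt_of_ne' (fun e => hnb1 (e ▸ hb.1))
            exact Finset.mem_union_right _ (Finset.mem_filter.2 ⟨hb.1, hlt, hb.2⟩)
        calc cnt (B (Fin.last n)) (ell (a (Fin.last n)) x2) ≤ _ := Finset.card_le_card hsub
          _ ≤ _ := Finset.card_union_le _ _
      have hcross : ((B (Fin.last n)).filter (fun b =>
            ell (a (Fin.last n)) x1 < b ∧ b < ell (a (Fin.last n)) x2)).card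
          ≤ ((B (Fin.last n)).filter (fun b => Cross a B τ b)).card := by
        apply Finset.card_le_card
        intro b hb
        rw [Finset.mem_filter] at hb ⊢
        exact ⟨hb.1, x1, hc1, x2, hc2, hb.2.1, hb.2.2⟩
      have hIcc : S.card ≤ S.max' hSne + 1 - S.min' hSne := by
        calc S.card ≤ (Finset.Icc (S.min' hSne) (S.max' hSne)).card :=
              Finset.card_le_card (fun s hs =>
                Finset.mem_Icc.2 ⟨S.min'_le s hs, S.le_max' s hs⟩)
          _ = S.max' hSne + 1 - S.min' hSne := Nat.card_Icc _ _
      rw [hcard]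
      omega
    have main1 : hfin.toFinset.card
        ≤ (hfin.toFinset.image (fun σ => σ ∘ Fin.castSucc)).card
          + ∑ b ∈ B (Fin.last n),
            ((hfin.toFinset.image (fun σ => σ ∘ Fin.castSucc)).filter
              (fun τ => Cross a B τ b)).card := by
      have h1 := Finset.card_eq_sum_card_image (fun σ : Fin (n+1) → ℕ => σ ∘ Fin.castSucc)
        hfin.toFinset
      have h2 := Finset.sum_le_sum fiber_bound
      have h3 : ∑ τ ∈ hfin.toFinset.image (fun σ => σ ∘ Fin.castSucc),
          (1 + ((B (Fin.last n)).filter (fun b => Cross a B τ b)).card)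
          = (hfin.toFinset.image (fun σ => σ ∘ Fin.castSucc)).card
            + ∑ τ ∈ hfin.toFinset.image (fun σ => σ ∘ Fin.castSucc),
              ((B (Fin.last n)).filter (fun b => Cross a B τ b)).card := by
        rw [Finset.sum_add_distrib, Finset.sum_const, smul_eq_mul, mul_one]
      have h4 : ∑ τ ∈ hfin.toFinset.image (fun σ => σ ∘ Fin.castSucc),
          ((B (Fin.last n)).filter (fun b => Cross a B τ b)).card
          = ∑ b ∈ B (Fin.last n),
            ((hfin.toFinset.image (fun σ => σ ∘ Fin.castSucc)).filter
              (fun τ => Cross a B τ b)).card := by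
        simp_rw [Finset.card_filter]
        exact Finset.sum_comm
      omega
    have hIcard : (hfin.toFinset.image (fun σ => σ ∘ Fin.castSucc)).card
        ≤ ∑ i ∈ Finset.range (d + 1), k ^ i * n.choose i := by
      have hsub : hfin.toFinset.image (fun σ => σ ∘ Fin.castSucc)
          ⊆ (sig_finite (fun i : Fin n => a i.castSucc) (fun i => B i.castSucc)).toFinset := by
        intro τ hτ
        obtain ⟨σ, hσ, rfl⟩ := Finset.mem_image.1 hτ
        obtain ⟨x, hgx, hpx⟩ := hfin.mem_toFinset.1 hσ
        rw [Set.Finite.mem_toFinset]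
        exact ⟨x, fun i => hgx i.castSucc, funext fun i => congrFun hpx i.castSucc⟩
      calc (hfin.toFinset.image (fun σ => σ ∘ Fin.castSucc)).card
          ≤ _ := Finset.card_le_card hsub
        _ = (Sig (fun i : Fin n => a i.castSucc) (fun i => B i.castSucc)).ncard :=
            (Set.ncard_eq_toFinset_card _ _).symm
        _ ≤ _ := IH d _ _ (fun i => hB i.castSucc)
    have hTFncard : (Sig a B).ncard = hfin.toFinset.card := Set.ncard_eq_toFinset_card _ hfin
    by_cases hz : ∃ j0, a (Fin.last n) j0 ≠ 0
    · obtain ⟨j0, hα⟩ := hz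
      have hd0 : d ≠ 0 := by rintro rfl; exact j0.elim0
      obtain ⟨m, rfl⟩ := Nat.exists_eq_succ_of_ne_zero hd0
      have hcrossb : ∀ b ∈ B (Fin.last n),
          ((hfin.toFinset.image (fun σ => σ ∘ Fin.castSucc)).filter
            (fun τ => Cross a B τ b)).card
          ≤ ∑ i ∈ Finset.range (m + 1), k ^ i * n.choose i := by
        intro b hbB
        set c : Fin n → ℝ := fun i => a i.castSucc j0 * b / a (Fin.last n) j0 with hc
        set a'' : Fin n → Fin m → ℝ := fun i j =>
          a i.castSucc (j0.succAbove j)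
            - (a i.castSucc j0 / a (Fin.last n) j0) * a (Fin.last n) (j0.succAbove j) with ha''
        set B'' : Fin n → Finset ℝ := fun i => (B i.castSucc).image (fun t => t - c i) with hB''def
        have hB'' : ∀ i, (B'' i).card ≤ k := by
          intro i
          calc (B'' i).card = (B i.castSucc).card := by
                rw [hB''def]
                exact Finset.card_image_of_injective _ sub_left_injective
            _ ≤ k := hB i.castSucc
        have hkeyid : ∀ z : Fin (m+1) → ℝ, ell (a (Fin.last n)) z = b →
            ∀ i : Fin n, ell (a'' i) (fun j => z (j0.succAbove j))
              = ell (a i.castSucc) z - c i := by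
          intro z hzb i
          have e1 : ∑ j : Fin m, a (Fin.last n) (j0.succAbove j) * z (j0.succAbove j)
              = b - a (Fin.last n) j0 * z j0 := by
            have h : ell (a (Fin.last n)) z = a (Fin.last n) j0 * z j0
                + ∑ j : Fin m, a (Fin.last n) (j0.succAbove j) * z (j0.succAbove j) :=
              Fin.sum_univ_succAbove (fun j => a (Fin.last n) j * z j) j0
            rw [hzb] at h
            linarith
          have e2 : ∑ j : Fin m, a i.castSucc (j0.succAbove j) * z (j0.succAbove j)
              = ell (a i.castSucc) z - a i.castSucc j0 * z j0 := by
            have h : ell (a i.castSucc) z = a i.castSucc j0 * z j0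
                + ∑ j : Fin m, a i.castSucc (j0.succAbove j) * z (j0.succAbove j) :=
              Fin.sum_univ_succAbove (fun j => a i.castSucc j * z j) j0
            linarith
          have expand : ell (a'' i) (fun j => z (j0.succAbove j))
              = (∑ j : Fin m, a i.castSucc (j0.succAbove j) * z (j0.succAbove j))
                - (a i.castSucc j0 / a (Fin.last n) j0)
                  * ∑ j : Fin m, a (Fin.last n) (j0.succAbove j) * z (j0.succAbove j) := by
            simp only [ha'', ell]
            rw [Finset.mul_sum, ← Finset.sum_sub_distrib]
            exact Finset.sum_congr rfl fun j _ => by ring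
          rw [expand, e1, e2]
          simp only [hc]
          field_simp
          ring
        have hsub2 : (hfin.toFinset.image (fun σ => σ ∘ Fin.castSucc)).filter
            (fun τ => Cross a B τ b) ⊆ (sig_finite a'' B'').toFinset := by
          intro τ hτ
          have hcr := (Finset.mem_filter.1 hτ).2
          obtain ⟨x, hx, y, hy, hxb, hby⟩ := hcr
          have hlt : ell (a (Fin.last n)) x < ell (a (Fin.last n)) y := hxb.trans hby
          have hden : (0:ℝ) < ell (a (Fin.last n)) y - ell (a (Fin.last n)) x := by linarith
          set θ : ℝ := (b - ell (a (Fin.last n)) x)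
              / (ell (a (Fin.last n)) y - ell (a (Fin.last n)) x) with hθ
          have hθ0 : 0 ≤ θ := div_nonneg (by linarith) hden.le
          have hθ1 : θ ≤ 1 := by rw [hθ, div_le_one hden]; linarith
          set z : Fin (m+1) → ℝ := fun j => x j + θ * (y j - x j) with hzdef
          have hθmul : θ * (ell (a (Fin.last n)) y - ell (a (Fin.last n)) x)
              = b - ell (a (Fin.last n)) x := by
            rw [hθ]; field_simp
          have hzb : ell (a (Fin.last n)) z = b := by
            rw [hzdef, ell_lerp, hθmul]; ring
          have hgapz : ∀ i : Fin n, ell (a i.castSucc) z ∉ B i.castSucc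
              ∧ cnt (B i.castSucc) (ell (a i.castSucc) z) = τ i := by
            intro i
            have hlz : ell (a i.castSucc) z
                = ell (a i.castSucc) x + θ * (ell (a i.castSucc) y - ell (a i.castSucc) x) := by
              rw [hzdef]; exact ell_lerp _ x y θ
            have hbet := lerp_between (ux := ell (a i.castSucc) x)
              (uy := ell (a i.castSucc) y) hθ0 hθ1
            rw [← hlz] at hbet
            exact mem_gap' (hx i).1 (hy i).1 (hx i).2 (hy i).2 hbet.1 hbet.2
          rw [Set.Finite.mem_toFinset]
          refine ⟨fun j => z (j0.succAbove j), fun i => ?_, funext fun i => ?_⟩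
          · rw [hkeyid z hzb i]
            simp only [hB''def]
            intro hmem
            exact (hgapz i).1 (mem_shift.1 hmem)
          · show cnt (B'' i) (ell (a'' i) fun j => z (j0.succAbove j)) = τ i
            rw [hkeyid z hzb i]
            simp only [hB''def]
            rw [cnt_shift]
            exact (hgapz i).2
        calc ((hfin.toFinset.image (fun σ => σ ∘ Fin.castSucc)).filter
              (fun τ => Cross a B τ b)).card
            ≤ _ := Finset.card_le_card hsub2
          _ = (Sig a'' B'').ncard := (Set.ncard_eq_toFinset_card _ _).symm
          _ ≤ _ := IH m a'' B'' hB''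
      have hsum : ∑ b ∈ B (Fin.last n),
          ((hfin.toFinset.image (fun σ => σ ∘ Fin.castSucc)).filter
            (fun τ => Cross a B τ b)).card
          ≤ k * ∑ i ∈ Finset.range (m + 1), k ^ i * n.choose i := by
        calc ∑ b ∈ B (Fin.last n),
            ((hfin.toFinset.image (fun σ => σ ∘ Fin.castSucc)).filter
              (fun τ => Cross a B τ b)).card
            ≤ ∑ _b ∈ B (Fin.last n), ∑ i ∈ Finset.range (m + 1), k ^ i * n.choose i :=
              Finset.sum_le_sum hcrossb
          _ = (B (Fin.last n)).card * ∑ i ∈ Finset.range (m + 1), k ^ i * n.choose i := by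
              rw [Finset.sum_const, smul_eq_mul]
          _ ≤ k * ∑ i ∈ Finset.range (m + 1), k ^ i * n.choose i :=
              Nat.mul_le_mul_right _ (hB (Fin.last n))
      have pascal : ∑ i ∈ Finset.range (m + 1 + 1), k ^ i * (n+1).choose i
          = ∑ i ∈ Finset.range (m + 1 + 1), k ^ i * n.choose i
            + k * ∑ i ∈ Finset.range (m + 1), k ^ i * n.choose i := by
        rw [Finset.sum_range_succ' (fun i => k ^ i * (n+1).choose i) (m+1),
            Finset.sum_range_succ' (fun i => k ^ i * n.choose i) (m+1), Finset.mul_sum]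
        have he : ∀ i ∈ Finset.range (m+1), k ^ (i+1) * (n+1).choose (i+1)
            = k ^ (i+1) * n.choose (i+1) + k * (k ^ i * n.choose i) := by
          intro i _
          rw [Nat.choose_succ_succ]
          ring
        rw [Finset.sum_congr rfl he, Finset.sum_add_distrib]
        simp only [pow_zero, Nat.choose_zero_right, one_mul, mul_one]
        omega
      rw [hTFncard]
      simp only [Nat.succ_eq_add_one] at hIcard main1 pascal hsum ⊢
      omega
    · push_neg at hz
      have hcrossempty : ∑ b ∈ B (Fin.last n),
          ((hfin.toFinset.image (fun σ => σ ∘ Fin.castSucc)).filter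
            (fun τ => Cross a B τ b)).card = 0 := by
        apply Finset.sum_eq_zero
        intro b _
        rw [Finset.card_eq_zero, Finset.filter_eq_empty_iff]
        rintro τ _ ⟨x, _, y, _, hxb, hby⟩
        have hx0 : ell (a (Fin.last n)) x = 0 := by simp [ell, hz]
        have hy0 : ell (a (Fin.last n)) y = 0 := by simp [ell, hz]
        rw [hx0] at hxb
        rw [hy0] at hby
        linarith
      have hmono : ∑ i ∈ Finset.range (d + 1), k ^ i * n.choose i
          ≤ ∑ i ∈ Finset.range (d + 1), k ^ i * (n+1).choose i :=
        Finset.sum_le_sum fun i _ =>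
          Nat.mul_le_mul_left _ (Nat.choose_le_choose i (Nat.le_succ n))
      rw [hTFncard]
      omega


lemma conn_eq {d n : ℕ} (a : Fin n → Fin d → ℝ) (B : Fin n → Finset ℝ)
    {x : Fin d → ℝ} (hx : good a B x) :
    connectedComponentIn {y | good a B y} x = {y | good a B y ∧ pv a B y = pv a B x} := by
  apply Set.Subset.antisymm
  · intro y hy
    have hyG : good a B y := connectedComponentIn_subset _ _ hy
    refine ⟨hyG, funext fun i => ?_⟩
    have hcont : Continuous (fun v : Fin d → ℝ => ell (a i) v) := by
      unfold ell
      exact continuous_finset_sum _ fun j _ => continuous_const.mul (continuous_apply j)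
    have hpc : IsPreconnected
        ((fun v => ell (a i) v) '' connectedComponentIn {y | good a B y} x) :=
      isPreconnected_connectedComponentIn.image _ hcont.continuousOn
    have hoc := hpc.ordConnected
    have hdisj : ∀ t ∈ (fun v => ell (a i) v) '' connectedComponentIn {y | good a B y} x,
        t ∉ B i := by
      rintro t ⟨z, hz, rfl⟩
      exact (connectedComponentIn_subset _ _ hz) i
    have hmemy : ell (a i) y
        ∈ (fun v => ell (a i) v) '' connectedComponentIn {y | good a B y} x :=
      Set.mem_image_of_mem _ hy
    have hmemx : ell (a i) x
        ∈ (fun v => ell (a i) v) '' connectedComponentIn {y | good a B y} x :=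
      Set.mem_image_of_mem _ (mem_connectedComponentIn hx)
    rcases lt_trichotomy (cnt (B i) (ell (a i) y)) (cnt (B i) (ell (a i) x)) with h | h | h
    · obtain ⟨b, hbB, hb1, hb2⟩ := cnt_between h
      exact absurd hbB (hdisj b (hoc.out hmemy hmemx ⟨hb1, hb2.le⟩))
    · exact h
    · obtain ⟨b, hbB, hb1, hb2⟩ := cnt_between h
      exact absurd hbB (hdisj b (hoc.out hmemx hmemy ⟨hb1, hb2.le⟩))
  · have hconv : Convex ℝ {y | good a B y ∧ pv a B y = pv a B x} := by
      intro y1 hy1 y2 hy2 α β hα hβ hαβ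
      have hg : ∀ i : Fin n, ell (a i) (α • y1 + β • y2) ∉ B i
          ∧ cnt (B i) (ell (a i) (α • y1 + β • y2)) = pv a B x i := by
        intro i
        have he := ell_comb (a i) y1 y2 α β
        have hbet := comb_between (u1 := ell (a i) y1) (u2 := ell (a i) y2) hα hβ hαβ
        rw [← he] at hbet
        exact mem_gap' (hy1.1 i) (hy2.1 i) (congrFun hy1.2 i) (congrFun hy2.2 i)
          hbet.1 hbet.2
      exact ⟨fun i => (hg i).1, funext fun i => (hg i).2⟩
    exact (hconv.isPreconnected).subset_connectedComponentIn ⟨hx, rfl⟩ (fun y hy => hy.1)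

end
end Stmt2Aux

/-- An arrangement of `n` families of at most `k` parallel hyperplanes each in `ℝ^d`
partitions `ℝ^d` into at most `∑_{i=0}^{d} k^i * C(n,i)` connected regions, which
equals `(k+1)^n` when `n ≤ d`. -/
theorem stmt_2 (d n k : ℕ)
    (a : Fin n → (Fin d → ℝ)) (ha : ∀ i, a i ≠ 0)
    (B : Fin n → Finset ℝ) (hB : ∀ i, (B i).card ≤ k)
    (U : Set (Fin d → ℝ))
    (hU : U = {x : Fin d → ℝ | ∃ i : Fin n, ∃ b ∈ B i, ∑ j, a i j * x j = b}) :
    Set.ncard {S : Set (Fin d → ℝ) | ∃ x ∈ Uᶜ, S = connectedComponentIn Uᶜ x}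
        ≤ ∑ i ∈ Finset.range (d + 1), k ^ i * n.choose i
    ∧ (n ≤ d →
      Set.ncard {S : Set (Fin d → ℝ) | ∃ x ∈ Uᶜ, S = connectedComponentIn Uᶜ x}
        ≤ (k + 1) ^ n) := by
  classical
  have hUc : Uᶜ = {x | Stmt2Aux.good a B x} := by
    rw [hU]
    ext x
    constructor
    · intro h i hi
      exact h ⟨i, _, hi, rfl⟩
    · rintro h ⟨i, b, hb, he⟩
      exact h i (by simpa [Stmt2Aux.ell, he] using hb)
  rw [hUc]
  have hset : {S | ∃ x ∈ {x | Stmt2Aux.good a B x},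
        S = connectedComponentIn {x | Stmt2Aux.good a B x} x}
      = (fun σ => {y | Stmt2Aux.good a B y ∧ Stmt2Aux.pv a B y = σ}) '' Stmt2Aux.Sig a B := by
    ext S
    constructor
    · rintro ⟨x, hx, rfl⟩
      exact ⟨Stmt2Aux.pv a B x, ⟨x, hx, rfl⟩, (Stmt2Aux.conn_eq a B hx).symm⟩
    · rintro ⟨σ, ⟨x, hx, rfl⟩, rfl⟩
      exact ⟨x, hx, (Stmt2Aux.conn_eq a B hx).symm⟩
  have h1 : Set.ncard {S | ∃ x ∈ {x | Stmt2Aux.good a B x},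
        S = connectedComponentIn {x | Stmt2Aux.good a B x} x}
      ≤ (Stmt2Aux.Sig a B).ncard := by
    rw [hset]
    exact Set.ncard_image_le (Stmt2Aux.sig_finite a B)
  have h2 := Stmt2Aux.sig_bound k n d a B hB
  refine ⟨h1.trans h2, fun hnd => ?_⟩
  have hsum_eq : ∑ i ∈ Finset.range (d + 1), k ^ i * n.choose i
      = ∑ i ∈ Finset.range (n + 1), k ^ i * n.choose i :=
    (Finset.sum_subset (Finset.range_subset_range.2 (by omega))
      (fun i _ hi => by
        simp only [Finset.mem_range, not_lt] at hi
        rw [Nat.choose_eq_zero_of_lt (by omega), mul_zero])).symm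
  have hpow : (k + 1) ^ n = ∑ i ∈ Finset.range (n + 1), k ^ i * n.choose i := by
    rw [add_pow]
    simp
  calc Set.ncard _ ≤ ∑ i ∈ Finset.range (d + 1), k ^ i * n.choose i := h1.trans h2
    _ = (k + 1) ^ n := by rw [hsum_eq, hpow]
end

section
/- Consider the discrete LIF dynamics on {0,1}-valued spike inputs: with β=1, θ=1, weight 1+ε for 0<ε<1/T, zero bias, and u(0)=0, define recursively s(t) = H(u(t-1) + (1+ε)·s⁰(t) − 1) and u(t) = u(t-1) + (1+ε)·s⁰(t) − s(t), where H is the Heaviside function (H(x)=1 iff x≥0). Then for every input spike train s⁰ ∈ {0,1}^T and every t ∈ {1,…,T}, s(t) = s⁰(t), and moreover u(t) = ε·(number of indices i ≤ t with s⁰(i)=1). -/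
open scoped Classical

/-- The Heaviside step function, with `H 0 = 1`. -/
noncomputable def heaviside (x : ℝ) : ℝ := if 0 ≤ x then 1 else 0

/-- With β = 1, θ = 1, weight 1+ε (0 < ε < 1/T), zero bias and u(0) = 0, the
discrete-time LIF neuron realizes the identity on binary spike trains, and its
membrane potential equals ε times the number of past input spikes. -/
theorem stmt_3 (T : ℕ) (hT : 0 < T) (ε : ℝ) (hε : 0 < ε) (hεT : ε < 1 / T)
    (s0 : ℕ → ℝ) (hs0 : ∀ t, s0 t = 0 ∨ s0 t = 1)
    (s u : ℕ → ℝ) (hu0 : u 0 = 0)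
    (hs : ∀ t : ℕ, s (t + 1) = heaviside (u t + (1 + ε) * s0 (t + 1) - 1))
    (hu : ∀ t : ℕ, u (t + 1) = u t + (1 + ε) * s0 (t + 1) - s (t + 1)) :
    ∀ t : ℕ, 1 ≤ t → t ≤ T →
      s t = s0 t ∧
      u t = ε * ((Finset.Icc 1 t).filter (fun i => s0 i = 1)).card := by
  have key : ∀ t : ℕ, t ≤ T →
      u t = ε * ((Finset.Icc 1 t).filter (fun i => s0 i = 1)).card ∧
      (1 ≤ t → s t = s0 t) := by
    intro t
    induction t with
    | zero =>
      intro _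
      refine ⟨?_, by omega⟩
      simp [hu0]
    | succ n ih =>
      intro hle
      have hn : n ≤ T := by omega
      obtain ⟨hun, -⟩ := ih hn
      have hcard : (((Finset.Icc 1 n).filter (fun i => s0 i = 1)).card : ℝ) ≤ n := by
        have := Finset.card_filter_le (Finset.Icc 1 n) (fun i => s0 i = 1)
        have h2 : (Finset.Icc 1 n).card = n := by simp
        exact_mod_cast this.trans h2.le
      have hub : u n < 1 := by
        rw [hun]
        calc ε * _ ≤ ε * n := by nlinarith
          _ ≤ ε * T := by
            have : (n : ℝ) ≤ T := by exact_mod_cast hn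
            nlinarith
          _ < 1 := by
            have hT' : (0 : ℝ) < T := by exact_mod_cast hT
            rw [lt_div_iff₀ hT'] at hεT
            linarith
      have hlb : 0 ≤ u n := by
        rw [hun]
        positivity
      have hsplit : Finset.Icc 1 (n + 1) = insert (n + 1) (Finset.Icc 1 n) := by
        rw [← Finset.insert_Icc_right_eq_Icc_add_one (by omega)]
      rcases hs0 (n + 1) with h0 | h1
      · have hsv : s (n + 1) = 0 := by
          rw [hs n, h0, heaviside, if_neg]
          push_neg
          linarith
        have hcard2 : ((Finset.Icc 1 (n+1)).filter (fun i => s0 i = 1)).card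
            = ((Finset.Icc 1 n).filter (fun i => s0 i = 1)).card := by
          rw [hsplit, Finset.filter_insert, if_neg (by rw [h0]; norm_num)]
        refine ⟨?_, fun _ => by rw [hsv, h0]⟩
        rw [hu n, hsv, h0, hcard2, hun]; ring
      · have hsv : s (n + 1) = 1 := by
          rw [hs n, h1, heaviside, if_pos]
          linarith
        have hcard2 : (((Finset.Icc 1 (n+1)).filter (fun i => s0 i = 1)).card : ℝ)
            = ((Finset.Icc 1 n).filter (fun i => s0 i = 1)).card + 1 := by
          rw [hsplit, Finset.filter_insert, if_pos h1, Finset.card_insert_of_notMem (by simp)]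
          push_cast; ring
        refine ⟨?_, fun _ => by rw [hsv, h1]⟩
        rw [hu n, hsv, h1, hcard2, hun]; ring
  intro t h1 h2
  exact ⟨(key t h2).2 h1, (key t h2).1⟩
end

section
/- Let T ≥ 1. Define N(t) as the number of distinct binary sequences in {0,1}^t that arise as spike trains (s(1),…,s(t)) of a single discrete-time LIF neuron as the constant input c ranges over ℝ (with β, θ, u(0) fixed). Then N(t) ≤ N(t−1) + t for all t ∈ [T], and consequently N(T) ≤ 1 + T(T+1)/2. -/
section aux
variable (β θ u0 : ℝ) (s u : ℝ → ℕ → ℝ)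

lemma lif_s01 (hs : ∀ c, ∀ t : ℕ, s c (t + 1) = heaviside (β * u c t + c - θ)) :
    ∀ c t, s c (t+1) = 0 ∨ s c (t+1) = 1 := by
  intro c t
  rw [hs]; unfold heaviside; split <;> simp

lemma lif_fin (hs : ∀ c, ∀ t : ℕ, s c (t + 1) = heaviside (β * u c t + c - θ)) :
    ∀ t : ℕ, {v : Fin t → ℝ | ∃ c : ℝ, ∀ i : Fin t, v i = s c (i.1 + 1)}.Finite := by
  intro t
  apply Set.Finite.subset (Set.Finite.pi (fun _ : Fin t => (Set.finite_singleton (0:ℝ)).insert 1))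
  rintro v ⟨c, hc⟩ i -
  rw [hc i]
  rcases lif_s01 β θ s u hs c i.1 with h | h <;> simp [h]

lemma lif_nNat (hs : ∀ c, ∀ t : ℕ, s c (t + 1) = heaviside (β * u c t + c - θ)) :
    ∀ c t, ∃ k : ℕ, (∑ j ∈ Finset.range t, s c (j+1)) = k ∧ k ≤ t := by
  intro c t
  induction t with
  | zero => exact ⟨0, by simp⟩
  | succ t ih =>
    obtain ⟨k, hk, hk'⟩ := ih
    rcases lif_s01 β θ s u hs c t with h | h
    · exact ⟨k, by rw [Finset.sum_range_succ, hk, h]; simp, by omega⟩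
    · exact ⟨k+1, by rw [Finset.sum_range_succ, hk, h]; push_cast; ring, by omega⟩

lemma lif_mono (hβ : β ∈ Set.Icc (0 : ℝ) 1) (hθ : 0 < θ)
    (hu0 : ∀ c, u c 0 = u0)
    (hs : ∀ c, ∀ t : ℕ, s c (t + 1) = heaviside (β * u c t + c - θ))
    (hu : ∀ c, ∀ t : ℕ, u c (t + 1) = β * u c t + c - θ * s c (t + 1)) :
    ∀ c c' : ℝ, c ≤ c' → ∀ t,
      (∑ j ∈ Finset.range t, s c (j+1)) ≤ (∑ j ∈ Finset.range t, s c' (j+1)) ∧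
      0 ≤ (u c' t - u c t) + θ * ((∑ j ∈ Finset.range t, s c' (j+1)) - (∑ j ∈ Finset.range t, s c (j+1))) := by
  intro c c' hcc t
  induction t with
  | zero => simp [hu0]
  | succ t ih =>
    obtain ⟨ihn, ihE⟩ := ih
    set D := u c' t - u c t with hD
    set nc := ∑ j ∈ Finset.range t, s c (j+1) with hnc
    set nc' := ∑ j ∈ Finset.range t, s c' (j+1) with hnc'
    have hβD : 0 ≤ β * D + θ * (nc' - nc) := by
      rcases le_or_gt 0 D with h | h
      · have : 0 ≤ β * D := mul_nonneg hβ.1 h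
        nlinarith [mul_nonneg hθ.le (sub_nonneg.mpr ihn)]
      · nlinarith [hβ.2, hβ.1]
    have hsum : ∀ d : ℝ, ∑ j ∈ Finset.range (t+1), s d (j+1)
        = (∑ j ∈ Finset.range t, s d (j+1)) + s d (t+1) := fun d => Finset.sum_range_succ _ _
    have hEnew : 0 ≤ (u c' (t+1) - u c (t+1)) +
        θ * ((∑ j ∈ Finset.range (t+1), s c' (j+1)) - (∑ j ∈ Finset.range (t+1), s c (j+1))) := by
      rw [hsum, hsum, hu, hu]
      have : (β * u c' t + c' - θ * s c' (t+1) - (β * u c t + c - θ * s c (t+1))) +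
          θ * ((nc' + s c' (t+1)) - (nc + s c (t+1)))
          = (β * D + θ * (nc' - nc)) + (c' - c) := by ring
      rw [this]
      linarith
    refine ⟨?_, hEnew⟩
    rw [hsum, hsum]
    rcases lif_s01 β θ s u hs c t with h0 | h1 <;>
      rcases lif_s01 β θ s u hs c' t with h0' | h1'
    · rw [h0, h0']; linarith
    · rw [h0, h1']; linarith
    · -- bad case: s c (t+1) = 1, s c' (t+1) = 0
      rw [h1, h0']
      -- show nc + 1 ≤ nc'
      have hx : 0 ≤ β * u c t + c - θ := by
        by_contra hcon
        rw [hs, heaviside, if_neg hcon] at h1; norm_num at h1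
      have hx' : β * u c' t + c' - θ < 0 := by
        by_contra hcon
        push_neg at hcon
        rw [hs, heaviside, if_pos hcon] at h0'; norm_num at h0'
      have hd : β * D + (c' - c) < 0 := by simp only [hD]; linarith
      have hβDneg : β * D < 0 := by linarith
      have hnpos : 0 < nc' - nc := by
        by_contra hcon
        push_neg at hcon
        nlinarith
      obtain ⟨k, hk, _⟩ := lif_nNat β θ s u hs c t
      obtain ⟨k', hk', _⟩ := lif_nNat β θ s u hs c' t
      rw [← hnc] at hk; rw [← hnc'] at hk'
      have : k < k' := by
        by_contra hcon
        push_neg at hcon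
        have : (k' : ℝ) ≤ k := by exact_mod_cast hcon
        rw [hk, hk'] at hnpos; linarith
      have : (k : ℝ) + 1 ≤ k' := by exact_mod_cast this
      rw [← hnc, ← hnc', hk, hk']; linarith
    · rw [h1, h1']; linarith


end aux

section aux2
variable (β θ u0 : ℝ) (s u : ℝ → ℕ → ℝ)

lemma lif_step (hβ : β ∈ Set.Icc (0 : ℝ) 1) (hθ : 0 < θ)
    (hu0 : ∀ c, u c 0 = u0)
    (hs : ∀ c, ∀ t : ℕ, s c (t + 1) = heaviside (β * u c t + c - θ))
    (hu : ∀ c, ∀ t : ℕ, u c (t + 1) = β * u c t + c - θ * s c (t + 1)) :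
    ∀ m : ℕ,
      Set.ncard {v : Fin (m+1) → ℝ | ∃ c : ℝ, ∀ i : Fin (m+1), v i = s c (i.1 + 1)}
        ≤ Set.ncard {v : Fin m → ℝ | ∃ c : ℝ, ∀ i : Fin m, v i = s c (i.1 + 1)} + (m+1) := by
  classical
  intro m
  set A : Set (Fin m → ℝ) := {v | ∃ c : ℝ, ∀ i : Fin m, v i = s c (i.1 + 1)} with hA
  set B : Set (Fin (m+1) → ℝ) := {v | ∃ c : ℝ, ∀ i : Fin (m+1), v i = s c (i.1 + 1)} with hB
  haveI : Finite A := (lif_fin β θ s u hs m).to_subtype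
  haveI : Finite B := (lif_fin β θ s u hs (m+1)).to_subtype
  -- spike count of the prefix
  set cnt : (Fin (m+1) → ℝ) → ℕ :=
    fun v => (Finset.univ.filter (fun i : Fin m => v i.castSucc = 1)).card with hcnt
  have hcntle : ∀ v, cnt v < m + 1 := fun v =>
    Nat.lt_succ_of_le ((Finset.card_filter_le _ _).trans (by simp))
  have hmono := fun c c' h t => (lif_mono β θ u0 s u hβ hθ hu0 hs hu c c' h t).1
  -- the prefix of a realizable train is realizable
  have hprefix : ∀ (v : Fin (m+1) → ℝ) (c : ℝ), (∀ i : Fin (m+1), v i = s c (i.1+1)) →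
      ∀ i : Fin m, v i.castSucc = s c (i.1+1) := by
    intro v c hc i
    have := hc i.castSucc
    simpa using this
  -- sum of prefix values equals cnt
  have hcntsum : ∀ (v : Fin (m+1) → ℝ) (c : ℝ), (∀ i : Fin m, v i.castSucc = s c (i.1+1)) →
      (∑ j ∈ Finset.range m, s c (j+1)) = (cnt v : ℝ) := by
    intro v c hc
    rw [← Fin.sum_univ_eq_sum_range (fun j => s c (j+1)) m, hcnt]
    rw [← Finset.sum_boole]
    apply Finset.sum_congr rfl
    intro i _
    rw [← hc i]
    rcases lif_s01 β θ s u hs c i.1 with h | h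
    · rw [← hc i] at h
      rw [h]; norm_num
    · rw [← hc i] at h
      rw [h]; simp
  -- key asymmetric contradiction lemma
  have key0 : ∀ (v w : Fin (m+1) → ℝ) (cb cc : ℝ) (j : ℕ) (hj : j < m),
      (∀ i : Fin m, v i.castSucc = s cb (i.1+1)) → s cb (m+1) = 0 →
      (∀ i : Fin (m+1), w i = s cc (i.1+1)) → w (Fin.last m) = 1 →
      cnt v = cnt w →
      (∀ i (h : i < j), v (⟨i, by omega⟩ : Fin m).castSucc = w (⟨i, by omega⟩ : Fin m).castSucc) →
      v (⟨j, hj⟩ : Fin m).castSucc = 1 → w (⟨j, hj⟩ : Fin m).castSucc = 0 → False := by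
    intro v w cb cc j hj hvb hvb0 hwc hwlast hcnteq hagree hv1 hw0
    have hwpre : ∀ i : Fin m, w i.castSucc = s cc (i.1+1) := hprefix w cc hwc
    -- sums at time j+1
    have hsb : ∑ i ∈ Finset.range (j+1), s cb (i+1)
        = (∑ i ∈ Finset.range j, s cc (i+1)) + 1 := by
      rw [Finset.sum_range_succ]
      congr 1
      · apply Finset.sum_congr rfl
        intro i hi
        have hi' : i < j := Finset.mem_range.mp hi
        have h1 := hvb ⟨i, by omega⟩
        have h2 := hwpre ⟨i, by omega⟩
        rw [← h1, hagree i hi', h2]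
      · have := hvb ⟨j, hj⟩
        rw [← this, hv1]
    have hsc : ∑ i ∈ Finset.range (j+1), s cc (i+1)
        = (∑ i ∈ Finset.range j, s cc (i+1)) := by
      rw [Finset.sum_range_succ]
      have := hwpre ⟨j, hj⟩
      rw [← this, hw0, add_zero]
    have hlt : cc < cb := by
      by_contra hcon
      push_neg at hcon
      have := hmono cb cc hcon (j+1)
      rw [hsb, hsc] at this
      linarith
    have := hmono cc cb hlt.le (m+1)
    rw [Finset.sum_range_succ, Finset.sum_range_succ] at this
    rw [hcntsum v cb hvb, hcntsum w cc hwpre, hvb0] at this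
    have hwl : s cc (m+1) = 1 := by
      have := hwc (Fin.last m)
      simp [Fin.val_last] at this
      rw [← this, hwlast]
    rw [hwl, hcnteq] at this
    linarith
  -- symmetric version
  have key : ∀ (v w : Fin (m+1) → ℝ) (ca cb cc cd : ℝ),
      (∀ i : Fin (m+1), v i = s ca (i.1+1)) → v (Fin.last m) = 1 →
      (∀ i : Fin m, v i.castSucc = s cb (i.1+1)) → s cb (m+1) = 0 →
      (∀ i : Fin (m+1), w i = s cc (i.1+1)) → w (Fin.last m) = 1 →
      (∀ i : Fin m, w i.castSucc = s cd (i.1+1)) → s cd (m+1) = 0 →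
      cnt v = cnt w →
      (∃ i : Fin m, v i.castSucc ≠ w i.castSucc) → False := by
    intro v w ca cb cc cd hva hvlast hvb hvb0 hwc hwlast hwd hwd0 hcnteq hdiff
    have hPex : ∃ i : ℕ, ∃ h : i < m, v (⟨i, h⟩ : Fin m).castSucc ≠ w (⟨i, h⟩ : Fin m).castSucc := by
      obtain ⟨i, hi⟩ := hdiff
      exact ⟨i.1, i.2, by simpa using hi⟩
    set j := Nat.find hPex with hjdef
    obtain ⟨hj, hne⟩ := Nat.find_spec hPex
    have hagree : ∀ i (h : i < j), v (⟨i, by omega⟩ : Fin m).castSucc = w (⟨i, by omega⟩ : Fin m).castSucc := by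
      intro i hij
      have hmin := Nat.find_min hPex hij
      push_neg at hmin
      exact hmin (by omega)
    have hv01 : v (⟨j, hj⟩ : Fin m).castSucc = 0 ∨ v (⟨j, hj⟩ : Fin m).castSucc = 1 := by
      rw [hprefix v ca hva ⟨j, hj⟩]
      exact lif_s01 β θ s u hs ca j
    have hw01 : w (⟨j, hj⟩ : Fin m).castSucc = 0 ∨ w (⟨j, hj⟩ : Fin m).castSucc = 1 := by
      rw [hprefix w cc hwc ⟨j, hj⟩]
      exact lif_s01 β θ s u hs cc j
    rcases hv01 with hv0 | hv1 <;> rcases hw01 with hw0 | hw1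
    · exact hne (by rw [hv0, hw0])
    · exact key0 w v cd ca j hj hwd hwd0 hva hvlast hcnteq.symm
        (fun i h => (hagree i h).symm) hw1 hv0
    · exact key0 v w cb cc j hj hvb hvb0 hwc hwlast hcnteq hagree hv1 hw0
    · exact hne (by rw [hv1, hw1])
  -- the injection
  set SP : (Fin (m+1) → ℝ) → Prop :=
    fun v => v (Fin.last m) = 1 ∧ ∃ c, (∀ i : Fin m, v i.castSucc = s c (i.1+1)) ∧ s c (m+1) = 0
    with hSP
  set g : B → (A ⊕ Fin (m+1)) := fun x =>
    if SP x.1 then Sum.inr ⟨cnt x.1, hcntle x.1⟩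
    else Sum.inl ⟨fun i : Fin m => x.1 i.castSucc, by
      obtain ⟨c, hc⟩ := x.2
      exact ⟨c, fun i => hprefix x.1 c hc i⟩⟩ with hg
  have hginj : Function.Injective g := by
    rintro ⟨v, hv⟩ ⟨w, hw⟩ hvw
    obtain ⟨ca, hca⟩ := hv
    obtain ⟨cc, hcc⟩ := hw
    simp only [hg] at hvw
    have hcalast : v (Fin.last m) = s ca (m+1) := hca (Fin.last m)
    have hcclast : w (Fin.last m) = s cc (m+1) := hcc (Fin.last m)
    by_cases h1 : SP v <;> by_cases h2 : SP w
    · rw [if_pos h1, if_pos h2] at hvw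
      simp only [Sum.inr.injEq, Fin.mk.injEq] at hvw
      obtain ⟨hvlast, cb, hvb, hvb0⟩ := h1
      obtain ⟨hwlast, cd, hwd, hwd0⟩ := h2
      have hpre : ∀ i : Fin m, v i.castSucc = w i.castSucc := by
        by_contra hcon
        push_neg at hcon
        exact key v w ca cb cc cd hca hvlast hvb hvb0 hcc hwlast hwd hwd0 hvw hcon
      apply Subtype.ext
      show v = w
      funext i
      refine Fin.lastCases ?_ ?_ i
      · rw [hvlast, hwlast]
      · exact hpre
    · rw [if_pos h1, if_neg h2] at hvw
      exact absurd hvw (by simp)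
    · rw [if_neg h1, if_pos h2] at hvw
      exact absurd hvw (by simp)
    · rw [if_neg h1, if_neg h2] at hvw
      simp only [Sum.inl.injEq, Subtype.mk.injEq] at hvw
      have hpre : ∀ i : Fin m, v i.castSucc = w i.castSucc := fun i => congrFun hvw i
      have hvl01 : v (Fin.last m) = 0 ∨ v (Fin.last m) = 1 := by
        rw [hcalast]; exact lif_s01 β θ s u hs ca m
      have hwl01 : w (Fin.last m) = 0 ∨ w (Fin.last m) = 1 := by
        rw [hcclast]; exact lif_s01 β θ s u hs cc m
      have hlast : v (Fin.last m) = w (Fin.last m) := by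
        rcases hvl01 with hv0 | hv1 <;> rcases hwl01 with hw0 | hw1
        · rw [hv0, hw0]
        · exfalso
          apply h2
          refine ⟨hw1, ca, ?_, ?_⟩
          · intro i
            rw [← hpre i]
            exact hprefix v ca hca i
          · rw [← hcalast, hv0]
        · exfalso
          apply h1
          refine ⟨hv1, cc, ?_, ?_⟩
          · intro i
            rw [hpre i]
            exact hprefix w cc hcc i
          · rw [← hcclast, hw0]
        · rw [hv1, hw1]
      apply Subtype.ext
      show v = w
      funext i
      refine Fin.lastCases ?_ ?_ i
      · exact hlast
      · exact hpre
  have hcard := Nat.card_le_card_of_injective g hginj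
  rw [Nat.card_sum] at hcard
  rw [Nat.card_coe_set_eq, Nat.card_coe_set_eq] at hcard
  simpa using hcard

end aux2


/-- As the constant input `c` ranges over ℝ, the number `N(t)` of distinct spike
trains of length `t` produced by a single discrete-time LIF neuron satisfies
`N(t) ≤ N(t−1) + t`, and consequently `N(T) ≤ 1 + T(T+1)/2`. -/
theorem stmt_13 (T : ℕ) (hT : 1 ≤ T) (β θ u0 : ℝ)
    (hβ : β ∈ Set.Icc (0 : ℝ) 1) (hθ : 0 < θ)
    (s u : ℝ → ℕ → ℝ) (hu0 : ∀ c, u c 0 = u0)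
    (hs : ∀ c, ∀ t : ℕ, s c (t + 1) = heaviside (β * u c t + c - θ))
    (hu : ∀ c, ∀ t : ℕ, u c (t + 1) = β * u c t + c - θ * s c (t + 1)) :
    (∀ t : ℕ, 1 ≤ t → t ≤ T →
      Set.ncard {v : Fin t → ℝ | ∃ c : ℝ, ∀ i : Fin t, v i = s c (i.1 + 1)}
        ≤ Set.ncard {v : Fin (t - 1) → ℝ | ∃ c : ℝ, ∀ i : Fin (t - 1), v i = s c (i.1 + 1)} + t)
    ∧ Set.ncard {v : Fin T → ℝ | ∃ c : ℝ, ∀ i : Fin T, v i = s c (i.1 + 1)}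
        ≤ 1 + T * (T + 1) / 2 := by
  have hstep := lif_step β θ u0 s u hβ hθ hu0 hs hu
  constructor
  · intro t h1 _
    obtain ⟨m, rfl⟩ : ∃ m, t = m + 1 := ⟨t - 1, by clear * - h1; omega⟩
    have := hstep m
    simpa using this
  · have hbase : Set.ncard {v : Fin 0 → ℝ | ∃ c : ℝ, ∀ i : Fin 0, v i = s c (i.1 + 1)} = 1 := by
      have huniv : {v : Fin 0 → ℝ | ∃ c : ℝ, ∀ i : Fin 0, v i = s c (i.1 + 1)} = Set.univ := by
        apply Set.eq_univ_iff_forall.mpr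
        intro v
        exact ⟨0, fun i => i.elim0⟩
      rw [huniv, Set.ncard_univ, Nat.card_eq_one_iff_unique]
      exact ⟨⟨fun f g => funext fun i => i.elim0⟩, ⟨fun _ => 0⟩⟩
    have hN : ∀ m : ℕ,
        Set.ncard {v : Fin m → ℝ | ∃ c : ℝ, ∀ i : Fin m, v i = s c (i.1 + 1)}
          ≤ 1 + m * (m + 1) / 2 := by
      intro m
      induction m with
      | zero => exact le_trans hbase.le (by norm_num)
      | succ m ih =>
        have h2 := hstep m
        obtain ⟨k, hk⟩ := Nat.even_mul_succ_self m
        obtain ⟨k', hk'⟩ := Nat.even_mul_succ_self (m + 1)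
        have harith : (m + 1) * (m + 1 + 1) = m * (m + 1) + 2 * (m + 1) := by ring
        rw [hk, hk'] at harith
        rw [hk] at ih
        rw [hk']
        revert ih h2
        generalize Set.ncard {v : Fin (m + 1) → ℝ | ∃ c : ℝ, ∀ i : Fin (m + 1), v i = s c (i.1 + 1)} = a
        generalize Set.ncard {v : Fin m → ℝ | ∃ c : ℝ, ∀ i : Fin m, v i = s c (i.1 + 1)} = b
        intro ih h2
        clear * - ih h2 harith
        omega
    exact hN T
end
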